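/- Let ℓ be a fixed positive integer. (i) If ℓ ≥ 2, then for all sufficiently large n, ρ(S_{n,ℓ}^{++}) ≥ ρ(S_{n,ℓ}^{+}) ≥ (ℓ − 1 + √((ℓ−1)² + 4ℓ(n−ℓ)))/2 ≥ √(ℓn). (ii) If ℓ ≥ 1, then for all sufficiently large n, ρ(S_{n,ℓ}^{++}) ≤ √((ℓ + 1/(4ℓ))·n). -/

import Mathlib

open SimpleGraph
open scoped Classical

/-- The largest real eigenvalue of the adjacency matrix of `G`
(the spectral radius of a graph). -/
noncomputable def specRad {V : Type} [Fintype V] (G : SimpleGraph V) : ℝ :=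
  sSup {μ : ℝ | ∃ x : V → ℝ, x ≠ 0 ∧ (G.adjMatrix ℝ).mulVec x = μ • x}

/-- `G` contains a (not necessarily induced) copy of `F` as a subgraph. -/
def ContainsCopy {α β : Type} (F : SimpleGraph α) (G : SimpleGraph β) : Prop :=
  ∃ f : α → β, Function.Injective f ∧ ∀ a b, F.Adj a b → G.Adj (f a) (f b)

/-- The Turán number `ex(n, F)`. -/
noncomputable def exNum {α : Type} (n : ℕ) (F : SimpleGraph α) : ℕ :=
  sSup {m : ℕ | ∃ G : SimpleGraph (Fin n), ¬ ContainsCopy F G ∧ G.edgeSet.ncard = m}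

/-- The spectral Turán number `spex(n, F)`. -/
noncomputable def spex {α : Type} (n : ℕ) (F : SimpleGraph α) : ℝ :=
  sSup {r : ℝ | ∃ G : SimpleGraph (Fin n), ¬ ContainsCopy F G ∧ specRad G = r}

/-- `t` vertex-disjoint copies of `F`. -/
def copies {α : Type} (t : ℕ) (F : SimpleGraph α) : SimpleGraph (Fin t × α) where
  Adj x y := x.1 = y.1 ∧ F.Adj x.2 y.2
  symm := ⟨fun _ _ h => ⟨h.1.symm, h.2.symm⟩⟩
  loopless := ⟨fun x h => F.irrefl h.2⟩

/-- The join `G + H` of two graphs. -/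
def joinG {α β : Type} (G : SimpleGraph α) (H : SimpleGraph β) : SimpleGraph (α ⊕ β) where
  Adj x y := match x, y with
    | Sum.inl a, Sum.inl b => G.Adj a b
    | Sum.inr a, Sum.inr b => H.Adj a b
    | Sum.inl _, Sum.inr _ => True
    | Sum.inr _, Sum.inl _ => True
  symm := by
    constructor
    rintro (a|a) (b|b) h
    · exact G.adj_symm h
    · trivial
    · trivial
    · exact H.adj_symm h
  loopless := by
    constructor
    rintro (a|a) h
    · exact G.irrefl h
    · exact H.irrefl h

/-- `S_{n,ℓ}^{+}`: the join of `K_ℓ` with an independent set of `n - ℓ` vertices,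
plus one edge inside the independent set. -/
def sPlus (n ℓ : ℕ) : SimpleGraph (Fin n) :=
  SimpleGraph.fromRel (fun i j => (i : ℕ) < ℓ ∨ ((i : ℕ) ≤ ℓ + 1 ∧ (j : ℕ) ≤ ℓ + 1))

/-- `S_{n,ℓ}^{++}`: the join of `K_ℓ` with an independent set of `n - ℓ` vertices,
plus a maximum matching inside the independent set. -/
def sPP (n ℓ : ℕ) : SimpleGraph (Fin n) :=
  SimpleGraph.fromRel (fun i j => (i : ℕ) < ℓ ∨ ((i : ℕ) - ℓ) / 2 = ((j : ℕ) - ℓ) / 2)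

/-- The number of edges inside a vertex subset `A`. -/
noncomputable def eIn {n : ℕ} (G : SimpleGraph (Fin n)) (A : Finset (Fin n)) : ℕ :=
  (G.induce (A : Set (Fin n))).edgeSet.ncard

/-- The number of edges between two disjoint vertex subsets `A` and `B`. -/
noncomputable def eCross {n : ℕ} (G : SimpleGraph (Fin n)) (A B : Finset (Fin n)) : ℕ :=
  Set.ncard {p : Fin n × Fin n | p.1 ∈ A ∧ p.2 ∈ B ∧ G.Adj p.1 p.2}

section auxSpec
open Matrix

variable {n l : ℕ}

lemma dot_self_pos {x : Fin n → ℝ} (hx : x ≠ 0) : 0 < x ⬝ᵥ x := by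
  have : ∃ i, x i ≠ 0 := by
    by_contra h
    push_neg at h
    exact hx (funext fun i => h i)
  obtain ⟨i, hi⟩ := this
  rw [dotProduct]
  exact Finset.sum_pos' (fun j _ => mul_self_nonneg (x j))
    ⟨i, Finset.mem_univ i, mul_self_pos.mpr hi⟩

lemma qf_le_n (G : SimpleGraph (Fin n)) (x : Fin n → ℝ) :
    x ⬝ᵥ ((G.adjMatrix ℝ) *ᵥ x) ≤ (n : ℝ) * (x ⬝ᵥ x) := by
  have h1 : x ⬝ᵥ ((G.adjMatrix ℝ) *ᵥ x) ≤ (∑ i, |x i|) ^ 2 := by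
    rw [dotProduct, sq, Finset.sum_mul_sum]
    apply Finset.sum_le_sum
    intro i _
    rw [Matrix.mulVec, dotProduct, Finset.mul_sum]
    apply Finset.sum_le_sum
    intro j _
    simp only [SimpleGraph.adjMatrix_apply]
    split_ifs
    · calc x i * (1 * x j) = x i * x j := by ring
        _ ≤ |x i * x j| := le_abs_self _
        _ = |x i| * |x j| := abs_mul _ _
    · simp [mul_nonneg, abs_nonneg]
  have h2 : (∑ i, |x i|) ^ 2 ≤ (n : ℝ) * ∑ i, |x i| ^ 2 := by
    simpa using sq_sum_le_card_mul_sum_sq (s := (Finset.univ : Finset (Fin n))) (f := fun i => |x i|)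
  have h3 : (∑ i, |x i| ^ 2) = x ⬝ᵥ x := by
    simp [dotProduct, sq_abs, pow_two]
  rw [h3] at h2; linarith

lemma eigen_eq_qf {G : SimpleGraph (Fin n)} {μ : ℝ} {x : Fin n → ℝ}
    (hev : (G.adjMatrix ℝ).mulVec x = μ • x) :
    x ⬝ᵥ ((G.adjMatrix ℝ) *ᵥ x) = μ * (x ⬝ᵥ x) := by
  rw [show (G.adjMatrix ℝ) *ᵥ x = (G.adjMatrix ℝ).mulVec x from rfl, hev]
  simp [dotProduct, Finset.mul_sum]
  apply Finset.sum_congr rfl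
  intros; ring

lemma eigenSet_bddAbove (G : SimpleGraph (Fin n)) :
    BddAbove {μ : ℝ | ∃ x : Fin n → ℝ, x ≠ 0 ∧ (G.adjMatrix ℝ).mulVec x = μ • x} := by
  refine ⟨n, ?_⟩
  rintro μ ⟨x, hx, hev⟩
  have hpos : 0 < x ⬝ᵥ x := dot_self_pos hx
  have h1 := eigen_eq_qf hev
  have := qf_le_n G x
  rw [h1] at this
  exact le_of_mul_le_mul_right (by linarith) hpos

lemma rayleigh_le_specRad (hn : 0 < n) (G : SimpleGraph (Fin n)) (x : Fin n → ℝ) :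
    x ⬝ᵥ ((G.adjMatrix ℝ) *ᵥ x) ≤ specRad G * (x ⬝ᵥ x) := by
  have hA : (G.adjMatrix ℝ).IsHermitian := by
    rw [Matrix.IsHermitian, Matrix.conjTranspose_eq_transpose_of_trivial]
    exact G.isSymm_adjMatrix
  haveI : Nonempty (Fin n) := ⟨⟨0, hn⟩⟩
  set U : Matrix (Fin n) (Fin n) ℝ := (Matrix.IsHermitian.eigenvectorUnitary hA : Matrix (Fin n) (Fin n) ℝ) with hUdef
  set y : Fin n → ℝ := (star U) *ᵥ x with hy
  have hUU : U * star U = 1 := by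
    exact (Matrix.mem_unitaryGroup_iff).mp (Matrix.IsHermitian.eigenvectorUnitary hA).2
  have key : ∀ z : Fin n → ℝ, x ⬝ᵥ (U *ᵥ z) = y ⬝ᵥ z := by
    intro z
    rw [hy, Matrix.star_eq_conjTranspose, Matrix.conjTranspose_eq_transpose_of_trivial,
      Matrix.mulVec_transpose, ← dotProduct_mulVec]
  have h2 : x ⬝ᵥ x = y ⬝ᵥ y := by
    have := key y
    rw [hy] at this ⊢
    rw [Matrix.mulVec_mulVec, hUU, Matrix.one_mulVec] at this
    exact this.symm ▸ rfl
  have h1 : x ⬝ᵥ ((G.adjMatrix ℝ) *ᵥ x) = ∑ i, hA.eigenvalues i * (y i * y i) := by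
    conv_lhs => rw [hA.spectral_theorem, Unitary.conjStarAlgAut_apply]
    rw [← Matrix.mulVec_mulVec, ← Matrix.mulVec_mulVec, key, ← hy]
    simp [dotProduct, Matrix.mulVec_diagonal]
    apply Finset.sum_congr rfl
    intros; ring
  obtain ⟨i₀, -, hi₀⟩ := Finset.exists_max_image Finset.univ hA.eigenvalues ⟨⟨0, hn⟩, Finset.mem_univ _⟩
  have hmem : hA.eigenvalues i₀ ∈ {μ : ℝ | ∃ x : Fin n → ℝ, x ≠ 0 ∧ (G.adjMatrix ℝ).mulVec x = μ • x} := by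
    refine ⟨⇑(hA.eigenvectorBasis i₀), ?_, hA.mulVec_eigenvectorBasis i₀⟩
    intro h0
    have hnorm := hA.eigenvectorBasis.orthonormal.1 i₀
    rw [show (hA.eigenvectorBasis i₀) = 0 from ?_] at hnorm
    · simp at hnorm
    · ext j
      exact congrFun h0 j
  have hle : hA.eigenvalues i₀ ≤ specRad G := le_csSup (eigenSet_bddAbove G) hmem
  have h3 : ∑ i, hA.eigenvalues i * (y i * y i) ≤ hA.eigenvalues i₀ * (y ⬝ᵥ y) := by
    rw [dotProduct, Finset.mul_sum]
    apply Finset.sum_le_sum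
    intro i _
    exact mul_le_mul_of_nonneg_right (hi₀ i (Finset.mem_univ i)) (mul_self_nonneg _)
  have h4 : hA.eigenvalues i₀ * (y ⬝ᵥ y) ≤ specRad G * (y ⬝ᵥ y) := by
    apply mul_le_mul_of_nonneg_right hle
    exact Finset.sum_nonneg fun i _ => mul_self_nonneg _
  rw [h1, h2]
  linarith

lemma qf_abs_le (G : SimpleGraph (Fin n)) (x : Fin n → ℝ) :
    x ⬝ᵥ ((G.adjMatrix ℝ) *ᵥ x) ≤
      (fun i => |x i|) ⬝ᵥ ((G.adjMatrix ℝ) *ᵥ (fun i => |x i|)) := by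
  rw [dotProduct, dotProduct]
  apply Finset.sum_le_sum
  intro i _
  rw [Matrix.mulVec, dotProduct, Matrix.mulVec, dotProduct,
    Finset.mul_sum, Finset.mul_sum]
  apply Finset.sum_le_sum
  intro j _
  simp only [SimpleGraph.adjMatrix_apply]
  split_ifs
  · calc x i * (1 * x j) = x i * x j := by ring
      _ ≤ |x i * x j| := le_abs_self _
      _ = |x i| * (1 * |x j|) := by rw [abs_mul]; ring
  · simp

lemma specRad_le_of_qf {c : ℝ} (hc : 0 ≤ c) (G : SimpleGraph (Fin n))
    (H : ∀ x : Fin n → ℝ, (∀ i, 0 ≤ x i) →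
      x ⬝ᵥ ((G.adjMatrix ℝ) *ᵥ x) ≤ c * (x ⬝ᵥ x)) :
    specRad G ≤ c := by
  apply Real.sSup_le _ hc
  rintro μ ⟨x, hx, hev⟩
  have hpos : 0 < x ⬝ᵥ x := dot_self_pos hx
  have h1 := eigen_eq_qf hev
  have h2 := qf_abs_le G x
  have h3 := H (fun i => |x i|) (fun i => abs_nonneg _)
  have h4 : (fun i => |x i|) ⬝ᵥ (fun i => |x i|) = x ⬝ᵥ x := by
    simp only [dotProduct, abs_mul_abs_self]
  rw [h4] at h3
  rw [h1] at h2
  exact le_of_mul_le_mul_right (by linarith) hpos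

lemma specRad_nonneg (hn : 0 < n) (G : SimpleGraph (Fin n)) : 0 ≤ specRad G := by
  set i0 : Fin n := ⟨0, hn⟩
  set x : Fin n → ℝ := fun i => if i = i0 then 1 else 0 with hxdef
  have h := rayleigh_le_specRad hn G x
  have h1 : x ⬝ᵥ ((G.adjMatrix ℝ) *ᵥ x) = 0 := by
    simp [hxdef, dotProduct, Matrix.mulVec, Finset.sum_ite_eq', mul_ite]
    apply Finset.sum_eq_zero
    intro j _
    split_ifs with ha hb
    · exact absurd (hb ▸ ha) (G.irrefl)
    · rfl
    · rfl
  have h2 : x ⬝ᵥ x = 1 := by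
    simp [hxdef, dotProduct, Finset.sum_ite_eq', mul_ite]
  rw [h1, h2, mul_one] at h
  exact h

lemma sPlus_le_sPP (i j : Fin n) (h : (sPlus n l).Adj i j) : (sPP n l).Adj i j := by
  rw [sPlus, SimpleGraph.fromRel_adj] at h
  rw [sPP, SimpleGraph.fromRel_adj]
  obtain ⟨hne, h⟩ := h
  refine ⟨hne, ?_⟩
  have hne' : (i:ℕ) ≠ (j:ℕ) := fun e => hne (Fin.val_injective e)
  omega

lemma card_filter_lt (hln : l ≤ n) :
    (Finset.univ.filter (fun j : Fin n => (j:ℕ) < l)).card = l := by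
  have he : Finset.univ.filter (fun j : Fin n => (j:ℕ) < l) =
      Finset.attachFin (Finset.range l)
        (fun m hm => lt_of_lt_of_le (Finset.mem_range.mp hm) hln) := by
    ext j
    simp [Finset.mem_attachFin]
  rw [he, Finset.card_attachFin, Finset.card_range]

lemma card_filter_not_lt (hln : l ≤ n) :
    (Finset.univ.filter (fun j : Fin n => ¬ (j:ℕ) < l)).card = n - l := by
  have h := Finset.card_filter_add_card_filter_not
    (s := (Finset.univ : Finset (Fin n))) (p := fun j : Fin n => (j:ℕ) < l)
  rw [card_filter_lt hln] at h
  simp only [Finset.card_univ, Fintype.card_fin] at h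
  omega

lemma sum_ite_lt (hln : l ≤ n) (a c : ℝ) :
    ∑ j : Fin n, (if (j:ℕ) < l then a else c) = l*a + ((n:ℝ)-l)*c := by
  rw [Finset.sum_ite, Finset.sum_const, Finset.sum_const, card_filter_lt hln,
    card_filter_not_lt hln, nsmul_eq_mul, nsmul_eq_mul, Nat.cast_sub hln]

lemma sPlus_lower (hl2 : 2 ≤ l) (hln : l ≤ n) (hn : 0 < n) :
    ((l : ℝ) - 1 + Real.sqrt (((l : ℝ) - 1)^2 + 4*l*((n : ℝ) - l)))/2 ≤ specRad (sPlus n l) := by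
  set b : ℝ := (l:ℝ) - 1 with hb
  have hlR : (2:ℝ) ≤ l := by exact_mod_cast hl2
  have hnl : (l:ℝ) ≤ n := by exact_mod_cast hln
  have hb1 : (1:ℝ) ≤ b := by rw [hb]; linarith
  have harg : 0 ≤ b^2 + 4*(l:ℝ)*((n:ℝ)-l) := by nlinarith
  set s : ℝ := Real.sqrt (b^2 + 4*(l:ℝ)*((n:ℝ)-(l:ℝ))) with hsdef
  have hs0 : 0 ≤ s := Real.sqrt_nonneg _
  have hs2 : s^2 = b^2 + 4*(l:ℝ)*((n:ℝ)-l) := Real.sq_sqrt harg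
  set μ : ℝ := (b + s)/2 with hmu
  have hsb : b ≤ s := by
    have h := Real.sqrt_le_sqrt (show b^2 ≤ b^2 + 4*(l:ℝ)*((n:ℝ)-l) by nlinarith)
    rwa [Real.sqrt_sq (by linarith)] at h
  have hμ1 : 1 ≤ μ := by rw [hmu]; linarith
  have hμq : μ^2 = b*μ + (l:ℝ)*((n:ℝ)-l) := by rw [hmu]; nlinarith [hs2]
  set x : Fin n → ℝ := fun i => if (i:ℕ) < l then μ else (l:ℝ) with hx
  have hxnn : ∀ i, 0 ≤ x i := by
    intro i
    rw [hx]
    dsimp only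
    split_ifs
    · linarith
    · positivity
  have key : ∀ i, μ * x i ≤ ∑ j, (sPlus n l).adjMatrix ℝ i j * x j := by
    intro i
    by_cases hi : (i:ℕ) < l
    · have hAdj : ∀ j, (sPlus n l).adjMatrix ℝ i j * x j = if j = i then 0 else x j := by
        intro j
        by_cases hji : j = i
        · subst hji
          simp [SimpleGraph.adjMatrix_apply]
        · have hadj : (sPlus n l).Adj i j := by
            rw [sPlus, SimpleGraph.fromRel_adj]
            exact ⟨fun e => hji e.symm, Or.inl (Or.inl hi)⟩
          simp [SimpleGraph.adjMatrix_apply, hadj, hji]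
      rw [Finset.sum_congr rfl (fun j _ => hAdj j)]
      have hsplit : ∀ j : Fin n, (if j = i then (0:ℝ) else x j)
          = x j - (if j = i then x j else 0) := by
        intro j; split_ifs <;> ring
      rw [Finset.sum_congr rfl (fun j _ => hsplit j), Finset.sum_sub_distrib,
        Finset.sum_ite_eq' Finset.univ i x]
      have hsum : ∑ j, x j = (l:ℝ)*μ + ((n:ℝ)-l)*l := by
        rw [hx]; exact sum_ite_lt hln μ l
      rw [hsum]
      have hxi : x i = μ := by rw [hx]; simp [hi]
      rw [hxi]
      simp only [Finset.mem_univ, if_true]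
      nlinarith [hμq]
    · have hxi : x i = (l:ℝ) := by rw [hx]; simp [hi]
      have hterm : ∀ j : Fin n, (if (j:ℕ) < l then μ else 0) ≤ (sPlus n l).adjMatrix ℝ i j * x j := by
        intro j
        by_cases hj : (j:ℕ) < l
        · have hne : i ≠ j := by
            intro e
            rw [e] at hi
            exact hi hj
          have hadj : (sPlus n l).Adj i j := by
            rw [sPlus, SimpleGraph.fromRel_adj]
            exact ⟨hne, Or.inr (Or.inl hj)⟩
          have hxj : x j = μ := by rw [hx]; simp [hj]
          simp [SimpleGraph.adjMatrix_apply, hadj, hxj, hj]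
        · simp only [hj, if_false]
          apply mul_nonneg _ (hxnn j)
          simp [SimpleGraph.adjMatrix_apply]
          split_ifs <;> norm_num
      calc μ * x i = (l:ℝ)*μ + ((n:ℝ)-l)*0 := by rw [hxi]; ring
        _ = ∑ j : Fin n, (if (j:ℕ) < l then μ else 0) := (sum_ite_lt hln μ 0).symm
        _ ≤ _ := Finset.sum_le_sum (fun j _ => hterm j)
  have main : μ * (x ⬝ᵥ x) ≤ x ⬝ᵥ ((sPlus n l).adjMatrix ℝ *ᵥ x) := by
    rw [dotProduct, dotProduct, Finset.mul_sum]
    apply Finset.sum_le_sum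
    intro i _
    calc μ * (x i * x i) = x i * (μ * x i) := by ring
      _ ≤ x i * ((sPlus n l).adjMatrix ℝ *ᵥ x) i := by
          apply mul_le_mul_of_nonneg_left _ (hxnn i)
          exact key i
  have hray := rayleigh_le_specRad hn (sPlus n l) x
  have hx0 : x ≠ 0 := by
    intro h0
    have h00 := congrFun h0 ⟨0, hn⟩
    rw [hx] at h00
    simp only [Pi.zero_apply] at h00
    split_ifs at h00 <;> linarith
  have hpos : 0 < x ⬝ᵥ x := dot_self_pos hx0
  have : μ * (x ⬝ᵥ x) ≤ specRad (sPlus n l) * (x ⬝ᵥ x) := le_trans main hray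
  have hfin : μ ≤ specRad (sPlus n l) := le_of_mul_le_mul_right (by linarith) hpos
  calc ((l : ℝ) - 1 + Real.sqrt (((l : ℝ) - 1)^2 + 4*l*((n : ℝ) - l)))/2 = μ := by
        rw [hmu, hsdef, hb]
    _ ≤ _ := hfin

lemma sqrt_ln_le (hl2 : 2 ≤ l) (hn3 : l^3 ≤ n) :
    Real.sqrt ((l : ℝ) * n) ≤
      ((l : ℝ) - 1 + Real.sqrt (((l : ℝ) - 1)^2 + 4*l*((n : ℝ) - l)))/2 := by
  have hlR : (2:ℝ) ≤ l := by exact_mod_cast hl2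
  have hn3R : ((l:ℝ))^3 ≤ n := by exact_mod_cast hn3
  have hnl : (l:ℝ) ≤ n := by
    have h1 : l ≤ l^3 := by
      calc l = l^1 := (pow_one l).symm
        _ ≤ l^3 := Nat.pow_le_pow_right (by omega) (by norm_num)
    exact_mod_cast le_trans h1 hn3
  set b : ℝ := (l:ℝ) - 1 with hb
  have hb1 : (1:ℝ) ≤ b := by rw [hb]; linarith
  set t : ℝ := Real.sqrt ((l:ℝ)*n) with ht
  have ht0 : 0 ≤ t := Real.sqrt_nonneg _
  have ht2 : t^2 = (l:ℝ)*n := Real.sq_sqrt (by nlinarith)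
  have htl : (l:ℝ)^2 ≤ t := by nlinarith [ht2, ht0, hn3R, hlR]
  have hkey : (2*t - b)^2 ≤ b^2 + 4*(l:ℝ)*((n:ℝ)-l) := by nlinarith [ht2, htl, hb1]
  have hbt : 2*t - b ≤ Real.sqrt (b^2 + 4*(l:ℝ)*((n:ℝ)-l)) := by
    rcases le_or_gt (2*t - b) 0 with h | h
    · exact le_trans h (Real.sqrt_nonneg _)
    · have h2 := Real.sqrt_le_sqrt hkey
      rwa [Real.sqrt_sq h.le] at h2
  linarith

set_option maxHeartbeats 2000000 in
lemma sPP_upper (hl : 1 ≤ l) (hn : 300 * l^5 ≤ n) :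
    specRad (sPP n l) ≤ Real.sqrt (((l : ℝ) + 1/(4*l)) * n) := by
  have hl5 : l ≤ 300 * l^5 := by
    have h1 : l ≤ l^5 := by
      calc l = l^1 := (pow_one l).symm
        _ ≤ l^5 := Nat.pow_le_pow_right (by omega) (by norm_num)
    omega
  have hln : l ≤ n := le_trans hl5 hn
  have hn0 : 0 < n := lt_of_lt_of_le hl hln
  have hlR : (1:ℝ) ≤ l := by exact_mod_cast hl
  have hnR : 300*((l:ℝ))^5 ≤ n := by exact_mod_cast hn
  have hl0 : (0:ℝ) < l := by linarith
  have hcarg : (0:ℝ) ≤ ((l:ℝ) + 1/(4*l)) * n := by positivity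
  set c : ℝ := Real.sqrt (((l : ℝ) + 1/(4*l)) * n) with hcdef
  have hc0 : 0 ≤ c := Real.sqrt_nonneg _
  have hc2 : c^2 = (l:ℝ)*n + (n:ℝ)/(4*l) := by
    rw [hcdef, Real.sq_sqrt hcarg]; field_simp
  have hnn : (0:ℝ) ≤ n := by positivity
  have hll : (1:ℝ) ≤ (l:ℝ)^2 := by nlinarith
  have hl4 : (1:ℝ) ≤ (l:ℝ)^4 := by nlinarith [hll]
  have hcl : (l:ℝ)+1 ≤ c := by
    have hln6 : 300*(l:ℝ)^6 ≤ (l:ℝ)*n := by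
      have := mul_le_mul_of_nonneg_left hnR hl0.le
      nlinarith [this]
    have h300 : ((l:ℝ)+1)^2 ≤ 300*(l:ℝ)^6 := by
      have := mul_le_mul_of_nonneg_left hl4 (show (0:ℝ) ≤ 296*(l:ℝ)^2 by positivity)
      nlinarith [this, hll, hlR]
    have h1 : ((l:ℝ)+1)^2 ≤ c^2 := by
      have hdiv : (0:ℝ) ≤ (n:ℝ)/(4*l) := by positivity
      linarith [hc2, hln6, h300, hdiv]
    nlinarith [hc0, h1, hlR]
  have hkey : ((l:ℝ)+1)*c ≤ (n:ℝ)/(4*l) := by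
    have h1 : c ≤ Real.sqrt (2*(l:ℝ)*n) := by
      apply Real.sqrt_le_sqrt
      have h14 : 1/(4*(l:ℝ)) ≤ l := by
        rw [div_le_iff₀ (by linarith)]
        nlinarith
      nlinarith [hnn]
    have h2 : Real.sqrt (2*(l:ℝ)*n) ≤ (n:ℝ)/(8*l^2) := by
      have harg2 : 2*(l:ℝ)*n ≤ ((n:ℝ)/(8*l^2))^2 := by
        rw [div_pow, le_div_iff₀ (by positivity)]
        nlinarith [hnR, hnn, hl0]
      have h3 := Real.sqrt_le_sqrt harg2
      rwa [Real.sqrt_sq (by positivity)] at h3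
    calc ((l:ℝ)+1)*c ≤ (2*(l:ℝ)) * Real.sqrt (2*(l:ℝ)*n) := by
          apply mul_le_mul (by linarith) h1 hc0 (by linarith)
      _ ≤ (2*(l:ℝ)) * ((n:ℝ)/(8*l^2)) := by
          apply mul_le_mul_of_nonneg_left h2 (by linarith)
      _ = (n:ℝ)/(4*l) := by field_simp; ring
  have hclpos : 0 < c - (l:ℝ) := by linarith
  have hmain : (l:ℝ)*n ≤ (c-1)*(c-(l:ℝ)) := by nlinarith [hc2, hkey, hlR]
  apply specRad_le_of_qf hc0
  intro x hx
  set S : ℝ := ∑ i : Fin n, (if (i:ℕ) < l then x i else 0) with hS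
  set T : ℝ := ∑ i : Fin n, (if ¬ (i:ℕ) < l then x i else 0) with hT
  set sa : ℝ := ∑ i : Fin n, (if (i:ℕ) < l then x i^2 else 0) with hsa
  set sb : ℝ := ∑ i : Fin n, (if ¬ (i:ℕ) < l then x i^2 else 0) with hsb
  have hQ : x ⬝ᵥ ((sPP n l).adjMatrix ℝ *ᵥ x) =
      ∑ i : Fin n, ∑ j : Fin n, x i * ((sPP n l).adjMatrix ℝ i j * x j) := by
    rw [dotProduct]
    apply Finset.sum_congr rfl
    intro i _
    rw [Matrix.mulVec, dotProduct, Finset.mul_sum]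
  have hpt : ∀ i j : Fin n, x i * ((sPP n l).adjMatrix ℝ i j * x j) ≤
      (if (i:ℕ) < l ∨ (j:ℕ) < l then x i * x j else 0) +
      (if i ≠ j ∧ ¬ (i:ℕ) < l ∧ ¬ (j:ℕ) < l ∧ ((i:ℕ)-l)/2 = ((j:ℕ)-l)/2
        then x i * x j else 0) := by
    intro i j
    have hxx : 0 ≤ x i * x j := mul_nonneg (hx i) (hx j)
    have hnn2 : (0:ℝ) ≤ if i ≠ j ∧ ¬ (i:ℕ) < l ∧ ¬ (j:ℕ) < l ∧ ((i:ℕ)-l)/2 = ((j:ℕ)-l)/2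
        then x i * x j else 0 := by split_ifs; exacts [hxx, le_refl 0]
    have hnn1 : (0:ℝ) ≤ if (i:ℕ) < l ∨ (j:ℕ) < l then x i * x j else 0 := by
      split_ifs; exacts [hxx, le_refl 0]
    by_cases hadj : (sPP n l).Adj i j
    · have hA1 : (sPP n l).adjMatrix ℝ i j = 1 := by
        rw [SimpleGraph.adjMatrix_apply, if_pos hadj]
      rw [hA1, one_mul]
      rw [sPP, SimpleGraph.fromRel_adj] at hadj
      obtain ⟨hne, hdisj⟩ := hadj
      by_cases hPij : (i:ℕ) < l ∨ (j:ℕ) < l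
      · rw [if_pos hPij]
        linarith
      · push_neg at hPij
        rw [if_neg (by push_neg; exact hPij), if_pos ⟨hne, by omega, by omega, by omega⟩]
        linarith
    · have hA0 : (sPP n l).adjMatrix ℝ i j = 0 := by
        rw [SimpleGraph.adjMatrix_apply, if_neg hadj]
      rw [hA0, zero_mul, mul_zero]
      linarith
  have hQle : x ⬝ᵥ ((sPP n l).adjMatrix ℝ *ᵥ x) ≤
      (∑ i : Fin n, ∑ j : Fin n, (if (i:ℕ) < l ∨ (j:ℕ) < l then x i * x j else 0)) +
      (∑ i : Fin n, ∑ j : Fin n,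
        (if i ≠ j ∧ ¬ (i:ℕ) < l ∧ ¬ (j:ℕ) < l ∧ ((i:ℕ)-l)/2 = ((j:ℕ)-l)/2
          then x i * x j else 0)) := by
    rw [hQ, ← Finset.sum_add_distrib]
    apply Finset.sum_le_sum
    intro i _
    rw [← Finset.sum_add_distrib]
    exact Finset.sum_le_sum fun j _ => hpt i j
  have hcard1 : ∀ i : Fin n,
      (Finset.univ.filter (fun j : Fin n => i ≠ j ∧ ¬ (i:ℕ) < l ∧ ¬ (j:ℕ) < l ∧
        ((i:ℕ)-l)/2 = ((j:ℕ)-l)/2)).card ≤ 1 := by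
    intro i
    apply Finset.card_le_one.mpr
    intro a ha b hb
    simp only [Finset.mem_filter] at ha hb
    obtain ⟨-, hia, hil, hal, hda⟩ := ha
    obtain ⟨-, hib, -, hbl, hdb⟩ := hb
    have h1 : (i:ℕ) ≠ (a:ℕ) := Fin.val_injective.ne hia
    have h2 : (i:ℕ) ≠ (b:ℕ) := Fin.val_injective.ne hib
    exact Fin.ext (by omega)
  have hcard2 : ∀ j : Fin n,
      (Finset.univ.filter (fun i : Fin n => i ≠ j ∧ ¬ (i:ℕ) < l ∧ ¬ (j:ℕ) < l ∧
        ((i:ℕ)-l)/2 = ((j:ℕ)-l)/2)).card ≤ 1 := by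
    intro j
    apply Finset.card_le_one.mpr
    intro a ha b hb
    simp only [Finset.mem_filter] at ha hb
    obtain ⟨-, haj, hal, hjl, hda⟩ := ha
    obtain ⟨-, hbj, hbl, -, hdb⟩ := hb
    have h1 : (a:ℕ) ≠ (j:ℕ) := Fin.val_injective.ne haj
    have h2 : (b:ℕ) ≠ (j:ℕ) := Fin.val_injective.ne hbj
    exact Fin.ext (by omega)
  have hxsum : ∑ i : Fin n, x i = S + T := by
    rw [hS, hT, ← Finset.sum_add_distrib]
    apply Finset.sum_congr rfl
    intro i _
    by_cases h : (i:ℕ) < l <;> simp [h]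
  have hQ1 : (∑ i : Fin n, ∑ j : Fin n, (if (i:ℕ) < l ∨ (j:ℕ) < l then x i * x j else 0))
      = (S + T)^2 - T^2 := by
    have hptd : ∀ i j : Fin n, (if (i:ℕ) < l ∨ (j:ℕ) < l then x i * x j else 0)
        = x i * x j - (if ¬(i:ℕ) < l then x i else 0) * (if ¬(j:ℕ) < l then x j else 0) := by
      intro i j
      by_cases hi : (i:ℕ) < l <;> by_cases hj : (j:ℕ) < l <;> simp [hi, hj]
    calc (∑ i : Fin n, ∑ j : Fin n, (if (i:ℕ) < l ∨ (j:ℕ) < l then x i * x j else 0))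
        = ∑ i : Fin n, ∑ j : Fin n, (x i * x j -
            (if ¬(i:ℕ) < l then x i else 0) * (if ¬(j:ℕ) < l then x j else 0)) :=
          Finset.sum_congr rfl fun i _ => Finset.sum_congr rfl fun j _ => hptd i j
      _ = ∑ i : Fin n, ((∑ j : Fin n, x i * x j) -
            ∑ j : Fin n, (if ¬(i:ℕ) < l then x i else 0) * (if ¬(j:ℕ) < l then x j else 0)) :=
          Finset.sum_congr rfl fun i _ => Finset.sum_sub_distrib _ _
      _ = (∑ i : Fin n, ∑ j : Fin n, x i * x j) -
            ∑ i : Fin n, ∑ j : Fin n,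
              (if ¬(i:ℕ) < l then x i else 0) * (if ¬(j:ℕ) < l then x j else 0) :=
          Finset.sum_sub_distrib _ _
      _ = (∑ i : Fin n, x i) * (∑ j : Fin n, x j) - T * T := by
          rw [← Finset.sum_mul_sum, ← Finset.sum_mul_sum, ← hT]
      _ = (S + T)^2 - T^2 := by rw [hxsum]; ring
  have hQ2 : (∑ i : Fin n, ∑ j : Fin n,
      (if i ≠ j ∧ ¬ (i:ℕ) < l ∧ ¬ (j:ℕ) < l ∧ ((i:ℕ)-l)/2 = ((j:ℕ)-l)/2
        then x i * x j else 0)) ≤ sb := by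
    have hsplit : ∀ i j : Fin n,
        (if i ≠ j ∧ ¬ (i:ℕ) < l ∧ ¬ (j:ℕ) < l ∧ ((i:ℕ)-l)/2 = ((j:ℕ)-l)/2
          then x i * x j else 0) ≤
        (if i ≠ j ∧ ¬ (i:ℕ) < l ∧ ¬ (j:ℕ) < l ∧ ((i:ℕ)-l)/2 = ((j:ℕ)-l)/2
          then x i^2/2 else 0) +
        (if i ≠ j ∧ ¬ (i:ℕ) < l ∧ ¬ (j:ℕ) < l ∧ ((i:ℕ)-l)/2 = ((j:ℕ)-l)/2
          then x j^2/2 else 0) := by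
      intro i j
      split_ifs with h
      · nlinarith [sq_nonneg (x i - x j)]
      · norm_num
    have hpart1 : (∑ i : Fin n, ∑ j : Fin n,
        (if i ≠ j ∧ ¬ (i:ℕ) < l ∧ ¬ (j:ℕ) < l ∧ ((i:ℕ)-l)/2 = ((j:ℕ)-l)/2
          then x i^2/2 else 0)) ≤ sb/2 := by
      have hinner : ∀ i : Fin n, (∑ j : Fin n,
          (if i ≠ j ∧ ¬ (i:ℕ) < l ∧ ¬ (j:ℕ) < l ∧ ((i:ℕ)-l)/2 = ((j:ℕ)-l)/2
            then x i^2/2 else 0)) ≤ (if ¬ (i:ℕ) < l then x i^2 else 0)/2 := by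
        intro i
        by_cases hi : (i:ℕ) < l
        · have hz : (∑ j : Fin n,
              (if i ≠ j ∧ ¬ (i:ℕ) < l ∧ ¬ (j:ℕ) < l ∧ ((i:ℕ)-l)/2 = ((j:ℕ)-l)/2
                then x i^2/2 else 0)) = 0 :=
            Finset.sum_eq_zero fun j _ => if_neg (fun hc => hc.2.1 hi)
          rw [hz, if_neg (not_not.mpr hi)]
          norm_num
        · rw [if_pos hi, Finset.sum_ite, Finset.sum_const_zero, add_zero,
            Finset.sum_const, nsmul_eq_mul]
          have hc1 := hcard1 i
          have hc1R : ((Finset.univ.filter (fun j : Fin n => i ≠ j ∧ ¬ (i:ℕ) < l ∧ ¬ (j:ℕ) < l ∧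
              ((i:ℕ)-l)/2 = ((j:ℕ)-l)/2)).card : ℝ) ≤ 1 := by exact_mod_cast hc1
          have hnn2 : (0:ℝ) ≤ x i^2/2 := by positivity
          nlinarith [mul_le_mul_of_nonneg_right hc1R hnn2]
      calc _ ≤ ∑ i : Fin n, (if ¬ (i:ℕ) < l then x i^2 else 0)/2 :=
            Finset.sum_le_sum fun i _ => hinner i
        _ = sb/2 := by rw [hsb, Finset.sum_div]
    have hpart2 : (∑ i : Fin n, ∑ j : Fin n,
        (if i ≠ j ∧ ¬ (i:ℕ) < l ∧ ¬ (j:ℕ) < l ∧ ((i:ℕ)-l)/2 = ((j:ℕ)-l)/2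
          then x j^2/2 else 0)) ≤ sb/2 := by
      rw [Finset.sum_comm]
      have hinner : ∀ j : Fin n, (∑ i : Fin n,
          (if i ≠ j ∧ ¬ (i:ℕ) < l ∧ ¬ (j:ℕ) < l ∧ ((i:ℕ)-l)/2 = ((j:ℕ)-l)/2
            then x j^2/2 else 0)) ≤ (if ¬ (j:ℕ) < l then x j^2 else 0)/2 := by
        intro j
        by_cases hj : (j:ℕ) < l
        · have hz : (∑ i : Fin n,
              (if i ≠ j ∧ ¬ (i:ℕ) < l ∧ ¬ (j:ℕ) < l ∧ ((i:ℕ)-l)/2 = ((j:ℕ)-l)/2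
                then x j^2/2 else 0)) = 0 :=
            Finset.sum_eq_zero fun i _ => if_neg (fun hc => hc.2.2.1 hj)
          rw [hz, if_neg (not_not.mpr hj)]
          norm_num
        · rw [if_pos hj, Finset.sum_ite, Finset.sum_const_zero, add_zero,
            Finset.sum_const, nsmul_eq_mul]
          have hc2 := hcard2 j
          have hc2R : ((Finset.univ.filter (fun i : Fin n => i ≠ j ∧ ¬ (i:ℕ) < l ∧ ¬ (j:ℕ) < l ∧
              ((i:ℕ)-l)/2 = ((j:ℕ)-l)/2)).card : ℝ) ≤ 1 := by exact_mod_cast hc2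
          have hnn2 : (0:ℝ) ≤ x j^2/2 := by positivity
          nlinarith [mul_le_mul_of_nonneg_right hc2R hnn2]
      calc _ ≤ ∑ j : Fin n, (if ¬ (j:ℕ) < l then x j^2 else 0)/2 :=
            Finset.sum_le_sum fun j _ => hinner j
        _ = sb/2 := by rw [hsb, Finset.sum_div]
    calc (∑ i : Fin n, ∑ j : Fin n,
        (if i ≠ j ∧ ¬ (i:ℕ) < l ∧ ¬ (j:ℕ) < l ∧ ((i:ℕ)-l)/2 = ((j:ℕ)-l)/2
          then x i * x j else 0))
        ≤ ∑ i : Fin n, ∑ j : Fin n,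
          ((if i ≠ j ∧ ¬ (i:ℕ) < l ∧ ¬ (j:ℕ) < l ∧ ((i:ℕ)-l)/2 = ((j:ℕ)-l)/2
            then x i^2/2 else 0) +
          (if i ≠ j ∧ ¬ (i:ℕ) < l ∧ ¬ (j:ℕ) < l ∧ ((i:ℕ)-l)/2 = ((j:ℕ)-l)/2
            then x j^2/2 else 0)) :=
          Finset.sum_le_sum fun i _ => Finset.sum_le_sum fun j _ => hsplit i j
      _ = (∑ i : Fin n, ∑ j : Fin n,
          (if i ≠ j ∧ ¬ (i:ℕ) < l ∧ ¬ (j:ℕ) < l ∧ ((i:ℕ)-l)/2 = ((j:ℕ)-l)/2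
            then x i^2/2 else 0)) +
          (∑ i : Fin n, ∑ j : Fin n,
          (if i ≠ j ∧ ¬ (i:ℕ) < l ∧ ¬ (j:ℕ) < l ∧ ((i:ℕ)-l)/2 = ((j:ℕ)-l)/2
            then x j^2/2 else 0)) := by
          rw [← Finset.sum_add_distrib]
          exact Finset.sum_congr rfl fun i _ => Finset.sum_add_distrib
      _ ≤ sb/2 + sb/2 := add_le_add hpart1 hpart2
      _ = sb := by ring
  have hS0 : 0 ≤ S := Finset.sum_nonneg fun i _ => by
    split_ifs <;> simp [hx i]
  have hT0 : 0 ≤ T := Finset.sum_nonneg fun i _ => by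
    split_ifs <;> simp [hx i]
  have hsa0 : 0 ≤ sa := Finset.sum_nonneg fun i _ => by
    split_ifs <;> positivity
  have hsb0 : 0 ≤ sb := Finset.sum_nonneg fun i _ => by
    split_ifs <;> positivity
  have hS2 : S^2 ≤ (l:ℝ) * sa := by
    have h := sq_sum_le_card_mul_sum_sq
      (s := Finset.univ.filter (fun i : Fin n => (i:ℕ) < l)) (f := x)
    rw [card_filter_lt hln] at h
    rw [hS, hsa, ← Finset.sum_filter, ← Finset.sum_filter]
    exact h
  have hT2 : T^2 ≤ (n:ℝ) * sb := by
    have h := sq_sum_le_card_mul_sum_sq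
      (s := Finset.univ.filter (fun i : Fin n => ¬ (i:ℕ) < l)) (f := x)
    have hcd : ((Finset.univ.filter (fun i : Fin n => ¬ (i:ℕ) < l)).card : ℝ) ≤ n := by
      rw [card_filter_not_lt hln]
      have : n - l ≤ n := Nat.sub_le n l
      exact_mod_cast this
    rw [hT, hsb, ← Finset.sum_filter, ← Finset.sum_filter]
    calc (∑ i ∈ Finset.univ.filter (fun i : Fin n => ¬ (i:ℕ) < l), x i)^2
        ≤ ((Finset.univ.filter (fun i : Fin n => ¬ (i:ℕ) < l)).card : ℝ) *
          ∑ i ∈ Finset.univ.filter (fun i : Fin n => ¬ (i:ℕ) < l), x i^2 := h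
      _ ≤ (n:ℝ) * ∑ i ∈ Finset.univ.filter (fun i : Fin n => ¬ (i:ℕ) < l), x i^2 :=
          mul_le_mul_of_nonneg_right hcd (Finset.sum_nonneg fun i _ => sq_nonneg _)
  have hSle : S ≤ Real.sqrt ((l:ℝ)*sa) := by
    rw [← Real.sqrt_sq hS0]
    exact Real.sqrt_le_sqrt hS2
  have hTle : T ≤ Real.sqrt ((n:ℝ)*sb) := by
    rw [← Real.sqrt_sq hT0]
    exact Real.sqrt_le_sqrt hT2
  have hdivnn : (0:ℝ) ≤ (l:ℝ)*n/(c-(l:ℝ)) := div_nonneg (by positivity) hclpos.le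
  have hST : 2*S*T ≤ (c - (l:ℝ))*sa + ((l:ℝ)*n/(c-(l:ℝ)))*sb := by
    have h1 : S*T ≤ Real.sqrt ((l:ℝ)*sa) * Real.sqrt ((n:ℝ)*sb) :=
      mul_le_mul hSle hTle hT0 (Real.sqrt_nonneg _)
    have h2 : Real.sqrt ((l:ℝ)*sa) * Real.sqrt ((n:ℝ)*sb) =
        Real.sqrt ((c-(l:ℝ))*sa) * Real.sqrt (((l:ℝ)*n/(c-(l:ℝ)))*sb) := by
      rw [← Real.sqrt_mul (by positivity : (0:ℝ) ≤ (l:ℝ)*sa),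
        ← Real.sqrt_mul (mul_nonneg hclpos.le hsa0)]
      congr 1
      field_simp
    have h3 : 2 * (Real.sqrt ((c-(l:ℝ))*sa) * Real.sqrt (((l:ℝ)*n/(c-(l:ℝ)))*sb)) ≤
        (c-(l:ℝ))*sa + ((l:ℝ)*n/(c-(l:ℝ)))*sb := by
      have h4 := two_mul_le_add_sq (Real.sqrt ((c-(l:ℝ))*sa))
        (Real.sqrt (((l:ℝ)*n/(c-(l:ℝ)))*sb))
      rw [Real.sq_sqrt (mul_nonneg hclpos.le hsa0),
        Real.sq_sqrt (mul_nonneg hdivnn hsb0)] at h4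
      linarith [h4]
    have h5 := mul_le_mul_of_nonneg_left h1 (by norm_num : (0:ℝ) ≤ 2)
    rw [h2] at h5
    calc 2*S*T = 2*(S*T) := by ring
      _ ≤ 2 * (Real.sqrt ((c-(l:ℝ))*sa) * Real.sqrt (((l:ℝ)*n/(c-(l:ℝ)))*sb)) := h5
      _ ≤ _ := h3
  have hsab : sa + sb = x ⬝ᵥ x := by
    rw [hsa, hsb, dotProduct, ← Finset.sum_add_distrib]
    apply Finset.sum_congr rfl
    intro i _
    by_cases h : (i:ℕ) < l <;> simp [h, pow_two]
  have hdivle : (l:ℝ)*n/(c-(l:ℝ)) ≤ c - 1 := by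
    rw [div_le_iff₀ hclpos]
    nlinarith [hmain]
  have hsbfin : ((l:ℝ)*n/(c-(l:ℝ)))*sb + sb ≤ c * sb := by
    have := mul_le_mul_of_nonneg_right hdivle hsb0
    nlinarith [this]
  calc x ⬝ᵥ ((sPP n l).adjMatrix ℝ *ᵥ x) ≤ _ := hQle
    _ = ((S+T)^2 - T^2) + (∑ i : Fin n, ∑ j : Fin n,
          (if i ≠ j ∧ ¬ (i:ℕ) < l ∧ ¬ (j:ℕ) < l ∧ ((i:ℕ)-l)/2 = ((j:ℕ)-l)/2
            then x i * x j else 0)) := by rw [hQ1]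
    _ ≤ ((S+T)^2 - T^2) + sb := by linarith [hQ2]
    _ = S^2 + 2*S*T + sb := by ring
    _ ≤ ((l:ℝ)*sa) + ((c - (l:ℝ))*sa + ((l:ℝ)*n/(c-(l:ℝ)))*sb) + sb := by
        linarith [hS2, hST]
    _ = c*sa + (((l:ℝ)*n/(c-(l:ℝ)))*sb + sb) := by ring
    _ ≤ c*sa + c*sb := by linarith [hsbfin]
    _ = c * (sa + sb) := by ring
    _ = c * (x ⬝ᵥ x) := by rw [hsab]

end auxSpec


theorem spectral_radius_of_S_graphs (l : ℕ) (hl : 1 ≤ l) :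
    (2 ≤ l → ∃ n₀ : ℕ, ∀ n : ℕ, n₀ ≤ n →
      specRad (sPlus n l) ≤ specRad (sPP n l) ∧
      ((l : ℝ) - 1 + Real.sqrt (((l : ℝ) - 1)^2 + 4*l*((n : ℝ) - l)))/2 ≤ specRad (sPlus n l) ∧
      Real.sqrt ((l : ℝ) * n) ≤
        ((l : ℝ) - 1 + Real.sqrt (((l : ℝ) - 1)^2 + 4*l*((n : ℝ) - l)))/2) ∧
    (∃ n₀ : ℕ, ∀ n : ℕ, n₀ ≤ n →
      specRad (sPP n l) ≤ Real.sqrt (((l : ℝ) + 1/(4*l)) * n)) := by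
  have h35 : l^3 ≤ 300*l^5 :=
    le_trans (Nat.pow_le_pow_right hl (by norm_num))
      (Nat.le_mul_of_pos_left _ (by norm_num))
  have hll3 : l ≤ l^3 := by
    calc l = l^1 := (pow_one l).symm
      _ ≤ l^3 := Nat.pow_le_pow_right hl (by norm_num)
  constructor
  · intro hl2
    refine ⟨300 * l^5, fun n hn => ?_⟩
    have hn3 : l^3 ≤ n := le_trans h35 hn
    have hln : l ≤ n := le_trans hll3 hn3
    have hn0 : 0 < n := lt_of_lt_of_le hl hln
    refine ⟨?_, sPlus_lower hl2 hln hn0, sqrt_ln_le hl2 hn3⟩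
    apply specRad_le_of_qf (specRad_nonneg hn0 _)
    intro x hx
    calc dotProduct x (((sPlus n l).adjMatrix ℝ).mulVec x)
        ≤ dotProduct x (((sPP n l).adjMatrix ℝ).mulVec x) := by
          rw [dotProduct, dotProduct]
          apply Finset.sum_le_sum
          intro i _
          rw [Matrix.mulVec, dotProduct, Matrix.mulVec, dotProduct,
            Finset.mul_sum, Finset.mul_sum]
          apply Finset.sum_le_sum
          intro j _
          have hA : (sPlus n l).adjMatrix ℝ i j ≤ (sPP n l).adjMatrix ℝ i j := by
            rw [SimpleGraph.adjMatrix_apply, SimpleGraph.adjMatrix_apply]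
            split_ifs with h1 h2
            · exact le_refl 1
            · exact absurd (sPlus_le_sPP i j h1) h2
            · norm_num
            · exact le_refl 0
          exact mul_le_mul_of_nonneg_left
            (mul_le_mul_of_nonneg_right hA (hx j)) (hx i)
      _ ≤ specRad (sPP n l) * dotProduct x x := rayleigh_le_specRad hn0 _ x
  · exact ⟨300 * l^5, fun n hn => sPP_upper hl hn⟩
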